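/- For every integer n ≥ 2, the map p ↦ (πₓ(p), π_y(p)) is an injective ℚ-algebra homomorphism from R_n = ℚ[x, y₁, …, yₙ]/(x·y₁, …, x·yₙ) into ℚ[x] × ℚ[y₁, …, yₙ], and its range is exactly the subalgebra of pairs (f, g) whose constant terms agree; thus R_n is isomorphic as a ℚ-algebra to the fiber product {(f, g) ∈ ℚ[x] × ℚ[y₁, …, yₙ] : f(0) = g(0, …, 0)}. -/

import Mathlib

open MvPolynomial

/-- The ideal `(x·y₁, …, x·yₙ)` in `ℚ[x, y₁, …, yₙ]`, where `x = X 0` and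
`yᵢ = X i.succ` in `MvPolynomial (Fin (n+1)) ℚ`. -/
noncomputable def relIdeal (n : ℕ) : Ideal (MvPolynomial (Fin (n + 1)) ℚ) :=
  Ideal.span (Set.range fun i : Fin n => X 0 * X i.succ)

/-- The ring `R_n = ℚ[x, y₁, …, yₙ]/(x·y₁, …, x·yₙ)`. -/
abbrev Rring (n : ℕ) := MvPolynomial (Fin (n + 1)) ℚ ⧸ relIdeal n

/-- The assignment `x ↦ x`, `yᵢ ↦ 0`. -/
noncomputable def pxVals (n : ℕ) : Fin (n + 1) → Polynomial ℚ :=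
  Fin.cases Polynomial.X fun _ => 0

/-- The assignment `x ↦ 0`, `yᵢ ↦ yᵢ`. -/
noncomputable def pyVals (n : ℕ) : Fin (n + 1) → MvPolynomial (Fin n) ℚ :=
  Fin.cases 0 fun j => X j

/-- The ℚ-algebra homomorphism `πₓ : R_n → ℚ[x]`, `x̄ ↦ x`, `ȳᵢ ↦ 0`. -/
noncomputable def piX (n : ℕ) : Rring n →ₐ[ℚ] Polynomial ℚ :=
  Ideal.Quotient.liftₐ (relIdeal n) (aeval (pxVals n))
    (by
      intro a ha
      have h : relIdeal n ≤ RingHom.ker (aeval (R := ℚ) (pxVals n)) := by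
        rw [relIdeal, Ideal.span_le]
        rintro _ ⟨i, rfl⟩
        simp [RingHom.mem_ker, pxVals]
      exact RingHom.mem_ker.mp (h ha))

/-- The ℚ-algebra homomorphism `π_y : R_n → ℚ[y₁, …, yₙ]`, `x̄ ↦ 0`, `ȳᵢ ↦ yᵢ`. -/
noncomputable def piY (n : ℕ) : Rring n →ₐ[ℚ] MvPolynomial (Fin n) ℚ :=
  Ideal.Quotient.liftₐ (relIdeal n) (aeval (pyVals n))
    (by
      intro a ha
      have h : relIdeal n ≤ RingHom.ker (aeval (R := ℚ) (pyVals n)) := by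
        rw [relIdeal, Ideal.span_le]
        rintro _ ⟨i, rfl⟩
        simp [RingHom.mem_ker, pyVals]
      exact RingHom.mem_ker.mp (h ha))

noncomputable def sX (n : ℕ) : Polynomial ℚ →ₐ[ℚ] MvPolynomial (Fin (n+1)) ℚ :=
  Polynomial.aeval (X 0)

noncomputable def sY (n : ℕ) : MvPolynomial (Fin n) ℚ →ₐ[ℚ] MvPolynomial (Fin (n+1)) ℚ :=
  aeval (fun j => X j.succ)

lemma hx_cc (n : ℕ) (p : MvPolynomial (Fin (n+1)) ℚ) :
    (aeval (pxVals n) p).eval 0 = constantCoeff p := by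
  induction p using MvPolynomial.induction_on with
  | C a => simp
  | add p q hp hq => simp [hp, hq]
  | mul_X p i hp =>
      have h0 : (pxVals n i).eval 0 = 0 := by
        induction i using Fin.cases <;> simp [pxVals]
      simp [h0, hp]

lemma hy_cc (n : ℕ) (p : MvPolynomial (Fin (n+1)) ℚ) :
    MvPolynomial.eval (fun _ => (0:ℚ)) (aeval (pyVals n) p) = constantCoeff p := by
  induction p using MvPolynomial.induction_on with
  | C a => simp
  | add p q hp hq => simp only [map_add, hp, hq]
  | mul_X p i hp =>
      have h0 : MvPolynomial.eval (fun _ => (0:ℚ)) (pyVals n i) = 0 := by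
        induction i using Fin.cases <;> simp [pyVals]
      simp only [map_mul, aeval_X, hp, h0, constantCoeff_X, mul_zero]

lemma c1 (n : ℕ) (f : Polynomial ℚ) : aeval (pxVals n) (sX n f) = f := by
  rw [sX, ← Polynomial.aeval_algHom_apply]
  simp [pxVals]

lemma c2 (n : ℕ) (f : Polynomial ℚ) :
    aeval (pyVals n) (sX n f) = C (f.eval 0) := by
  rw [sX, ← Polynomial.aeval_algHom_apply]
  simp only [aeval_X, pyVals, Fin.cases_zero]
  rw [Polynomial.aeval_def, Polynomial.eval₂_at_zero, Polynomial.coeff_zero_eq_eval_zero]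
  rfl

lemma c3 (n : ℕ) (g : MvPolynomial (Fin n) ℚ) :
    aeval (pxVals n) (sY n g) = Polynomial.C (constantCoeff g) := by
  induction g using MvPolynomial.induction_on with
  | C a => simp [sY, Polynomial.C_eq_algebraMap]
  | add p q hp hq => simp [hp, hq]
  | mul_X p j hp => simp [sY, pxVals, hp]

lemma c4 (n : ℕ) (g : MvPolynomial (Fin n) ℚ) : aeval (pyVals n) (sY n g) = g := by
  induction g using MvPolynomial.induction_on with
  | C a => simp [sY]
  | add p q hp hq => simp only [map_add, hp, hq]
  | mul_X p j hp =>
      have h1 : sY n (p * X j) = sY n p * X j.succ := by simp [sY]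
      rw [h1, map_mul, hp]
      simp [pyVals]

lemma lemA (n : ℕ) (q : MvPolynomial (Fin n) ℚ) :
    sY n q - C (constantCoeff q) ∈
      Ideal.span (Set.range fun j : Fin n => (X j.succ : MvPolynomial (Fin (n+1)) ℚ)) := by
  induction q using MvPolynomial.induction_on with
  | C a => simp [sY]
  | add p q hp hq =>
      have h := Ideal.add_mem _ hp hq
      convert h using 1
      simp only [map_add]
      ring
  | mul_X p j hp =>
      have hmem : (X j.succ : MvPolynomial (Fin (n+1)) ℚ) ∈
          Ideal.span (Set.range fun j : Fin n => (X j.succ : MvPolynomial (Fin (n+1)) ℚ)) :=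
        Ideal.subset_span ⟨j, rfl⟩
      have := Ideal.mul_mem_left _ (sY n p) hmem
      convert this using 1
      simp [sY]

lemma lemA' (n : ℕ) (q : MvPolynomial (Fin n) ℚ) :
    (sY n q - C (constantCoeff q)) * X 0 ∈ relIdeal n := by
  have h := lemA n q
  refine Submodule.span_induction ?_ ?_ ?_ ?_ h
  · rintro _ ⟨j, rfl⟩
    have : (X j.succ : MvPolynomial (Fin (n+1)) ℚ) * X 0 = X 0 * X j.succ := by ring
    rw [this]
    exact Ideal.subset_span ⟨j, rfl⟩
  · simp [relIdeal]
  · intro a b _ _ ha hb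
    have := Ideal.add_mem _ ha hb
    convert this using 1; ring
  · intro r a _ ha
    have := Ideal.mul_mem_left _ r ha
    convert this using 1
    simp [smul_eq_mul]; ring

lemma lemB' (n : ℕ) (f : Polynomial ℚ) (i : Fin n) :
    (sX n f - C (f.eval 0)) * X i.succ ∈ relIdeal n := by
  have hdiv : (X 0 : MvPolynomial (Fin (n+1)) ℚ) ∣ (sX n f - C (f.eval 0)) := by
    refine ⟨sX n f.divX, ?_⟩
    have hf : Polynomial.X * f.divX + Polynomial.C (f.coeff 0) = f := Polynomial.X_mul_divX_add f
    calc sX n f - C (f.eval 0)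
        = sX n (Polynomial.X * f.divX + Polynomial.C (f.coeff 0)) - C (f.eval 0) := by rw [hf]
      _ = X 0 * sX n f.divX := by
          rw [Polynomial.coeff_zero_eq_eval_zero]
          simp [sX, algebraMap_eq]
  obtain ⟨r, hr⟩ := hdiv
  rw [hr]
  have : X 0 * r * X i.succ = r * (X 0 * X i.succ) := by ring
  rw [this]
  exact Ideal.mul_mem_left _ r (Ideal.subset_span ⟨i, rfl⟩)

lemma hy_cc' (n : ℕ) (p : MvPolynomial (Fin (n+1)) ℚ) :
    constantCoeff (aeval (pyVals n) p) = constantCoeff p := by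
  induction p using MvPolynomial.induction_on with
  | C a => simp
  | add p q hp hq => simp only [map_add, hp, hq]
  | mul_X p i hp =>
      have h0 : constantCoeff (pyVals n i) = 0 := by
        induction i using Fin.cases <;> simp [pyVals]
      simp only [map_mul, aeval_X, hp, h0, constantCoeff_X, mul_zero]

lemma keyD (n : ℕ) (p : MvPolynomial (Fin (n+1)) ℚ) :
    p - sX n (aeval (pxVals n) p) - sY n (aeval (pyVals n) p) + C (constantCoeff p)
      ∈ relIdeal n := by
  induction p using MvPolynomial.induction_on with
  | C a =>
      convert (relIdeal n).zero_mem using 2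
      simp [sX, sY, algebraMap_eq, Polynomial.C_eq_algebraMap]
  | add p q hp hq =>
      have h := Ideal.add_mem _ hp hq
      convert h using 1
      simp only [map_add]
      ring
  | mul_X p i hp =>
      induction i using Fin.cases with
      | zero =>
          have h2 := lemA' n (aeval (pyVals n) p)
          rw [hy_cc' n p] at h2
          have h1 := Ideal.mul_mem_right (X 0) _ hp
          have h := Ideal.add_mem _ h1 h2
          convert h using 1
          have hsX : sX n Polynomial.X = X 0 := by simp [sX]
          simp only [map_mul, aeval_X, pxVals, pyVals, Fin.cases_zero, constantCoeff_X,
            mul_zero, map_zero, sub_zero, hsX]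
          ring
      | succ i =>
          have h2 := lemB' n (aeval (pxVals n) p) i
          rw [hx_cc n p] at h2
          have h1 := Ideal.mul_mem_right (X i.succ) _ hp
          have h := Ideal.add_mem _ h1 h2
          convert h using 1
          have hsY : sY n (X i) = X i.succ := by simp [sY]
          simp only [map_mul, aeval_X, pxVals, pyVals, Fin.cases_succ, constantCoeff_X,
            mul_zero, map_zero, sub_zero, hsY]
          ring

lemma piX_mk (n : ℕ) (p : MvPolynomial (Fin (n+1)) ℚ) :
    piX n (Ideal.Quotient.mk (relIdeal n) p) = aeval (pxVals n) p := by
  simp [piX, Ideal.Quotient.liftₐ_apply, Ideal.Quotient.lift_mk]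
  exact Ideal.Quotient.lift_mk _ _ _

lemma piY_mk (n : ℕ) (p : MvPolynomial (Fin (n+1)) ℚ) :
    piY n (Ideal.Quotient.mk (relIdeal n) p) = aeval (pyVals n) p := by
  simp [piY, Ideal.Quotient.liftₐ_apply, Ideal.Quotient.lift_mk]
  exact Ideal.Quotient.lift_mk _ _ _

/-- For every integer `n ≥ 2`, the ℚ-algebra homomorphism `p ↦ (πₓ(p), π_y(p))` from
`R_n` into `ℚ[x] × ℚ[y₁, …, yₙ]` is injective, and its range is exactly the set of
pairs `(f, g)` with `f(0) = g(0, …, 0)`; thus `R_n` is isomorphic to the fiber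
product `{(f, g) : f(0) = g(0, …, 0)}`. -/
theorem injective_prod_and_range (n : ℕ) (hn : 2 ≤ n) :
    Function.Injective ((piX n).prod (piY n)) ∧
    Set.range ((piX n).prod (piY n)) =
      {fg : Polynomial ℚ × MvPolynomial (Fin n) ℚ |
        fg.1.eval 0 = MvPolynomial.eval (fun _ => (0 : ℚ)) fg.2} := by

  constructor
  · rw [injective_iff_map_eq_zero]
    intro a ha
    obtain ⟨p, rfl⟩ := Ideal.Quotient.mk_surjective (I := relIdeal n) a
    have h1 : aeval (pxVals n) p = 0 := by
      have := congrArg Prod.fst ha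
      simpa [AlgHom.prod_apply, piX_mk] using this
    have h2 : aeval (pyVals n) p = 0 := by
      have := congrArg Prod.snd ha
      simpa [AlgHom.prod_apply, piY_mk] using this
    have hcc : constantCoeff p = 0 := by
      rw [← hx_cc n p, h1]; simp
    have hD := keyD n p
    rw [h1, h2, hcc, map_zero, map_zero, map_zero] at hD
    simp only [sub_zero, add_zero] at hD
    rw [Ideal.Quotient.eq_zero_iff_mem]
    exact hD
  · ext fg
    obtain ⟨f, g⟩ := fg
    constructor
    · rintro ⟨a, ha⟩
      obtain ⟨p, rfl⟩ := Ideal.Quotient.mk_surjective (I := relIdeal n) a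
      have h1 : aeval (pxVals n) p = f := by
        have := congrArg Prod.fst ha
        simpa [AlgHom.prod_apply, piX_mk] using this
      have h2 : aeval (pyVals n) p = g := by
        have := congrArg Prod.snd ha
        simpa [AlgHom.prod_apply, piY_mk] using this
      show f.eval 0 = MvPolynomial.eval (fun _ => (0:ℚ)) g
      rw [← h1, ← h2, hx_cc n p, hy_cc n p]
    · intro h
      have h : f.eval 0 = MvPolynomial.eval (fun _ => (0:ℚ)) g := h
      refine ⟨Ideal.Quotient.mk (relIdeal n) (sX n f + sY n g - C (f.eval 0)), ?_⟩
      have hg0 : MvPolynomial.eval (fun _ => (0:ℚ)) g = constantCoeff g := by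
        simp [eval_zero']
      ext
      · simp only [AlgHom.prod_apply, piX_mk, map_add, map_sub, c1, c3, aeval_C]
        rw [h, hg0]
        simp [Polynomial.C_eq_algebraMap]
      · simp only [AlgHom.prod_apply, piY_mk, map_add, map_sub, c2, c4, aeval_C]
        simp [algebraMap_eq]
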